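/- The essential values β₁ > β₂ > ⋯ > β_q defined by the iterative contraction procedure form a strictly decreasing sequence of integers. That is, for each j ≥ 2, β_{j−1} > β_j, where β_j := max{⌈(p(X ∪ C_{j−1}) − p(C_{j−1}))/|X|⌉ : ∅ ≠ X ⊆ S − C_{j−1}}, C_j := C_{j−1} ∪ S_j, and S_j is the smallest subset of S − C_{j−1} maximizing X ↦ p(X ∪ C_{j−1}) − (β_j − 1)|X| − p(C_{j−1}). -/
import Mathlib


open Finset

variable {α : Type*} [Fintype α] [DecidableEq α]

def Supermodular (p : Finset α → EReal) : Prop :=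
  ∀ X Y : Finset α, p X + p Y ≤ p (X ∩ Y) + p (X ∪ Y)

/-- `p` takes values in `ℤ ∪ {−∞}`. -/
def IntegerValued (p : Finset α → EReal) : Prop :=
  ∀ X : Finset α, p X = ⊥ ∨ ∃ n : ℤ, p X = ((n : ℝ) : EReal)

/-- `X` maximizes `Z ↦ p(Z) − λ|Z|` over all subsets `Z` of the ground-set. -/
def IsMaximizer (p : Finset α → EReal) (lam : ℝ) (X : Finset α) : Prop :=
  ∀ Y : Finset α,
    p Y - ((lam * (Y.card : ℝ) : ℝ) : EReal) ≤ p X - ((lam * (X.card : ℝ) : ℝ) : EReal)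

/-- The data of the iterative contraction procedure defining the essential values
`β j`, the sets `S_j = Sj j` and the canonical chain `C j` (for `1 ≤ j ≤ q`):
`β j` is the maximum of `⌈(p(X ∪ C_{j−1}) − p(C_{j−1}))/|X|⌉` over nonempty
`X ⊆ S − C_{j−1}`; `Sj j` is the smallest subset of `S − C_{j−1}` maximizing
`h_j(X) = p(X ∪ C_{j−1}) − (β_j − 1)|X| − p(C_{j−1})`; and `C j = C (j−1) ∪ Sj j`. -/
structure CanonicalData (p : Finset α → EReal) (q : ℕ) (β : ℕ → ℤ)
    (C Sj : ℕ → Finset α) : Prop where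
  hC0 : C 0 = ∅
  hCq : C q = Finset.univ
  hCne : ∀ j, 1 ≤ j → j ≤ q → C (j - 1) ≠ Finset.univ
  /-- `β j` is an upper bound for the ceilings: `p(X ∪ C_{j−1}) − p(C_{j−1}) ≤ β_j |X|`. -/
  hβub : ∀ j, 1 ≤ j → j ≤ q → ∀ X : Finset α, X ⊆ Finset.univ \ C (j - 1) → X.Nonempty →
    p (X ∪ C (j - 1)) ≤ p (C (j - 1)) + (((β j * (X.card : ℤ) : ℤ) : ℝ) : EReal)
  /-- `β j` is attained: some nonempty `X` has `p(X ∪ C_{j−1}) − p(C_{j−1}) > (β_j−1)|X|`. -/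
  hβattain : ∀ j, 1 ≤ j → j ≤ q → ∃ X : Finset α, X ⊆ Finset.univ \ C (j - 1) ∧ X.Nonempty ∧
    p (C (j - 1)) + ((((β j - 1) * (X.card : ℤ) : ℤ) : ℝ) : EReal) < p (X ∪ C (j - 1))
  hSsub : ∀ j, 1 ≤ j → j ≤ q → Sj j ⊆ Finset.univ \ C (j - 1)
  /-- `Sj j` maximizes `h_j` over subsets of `S − C_{j−1}`. -/
  hSmax : ∀ j, 1 ≤ j → j ≤ q → ∀ X : Finset α, X ⊆ Finset.univ \ C (j - 1) →
    p (X ∪ C (j - 1)) - ((((β j - 1) * (X.card : ℤ) : ℤ) : ℝ) : EReal) ≤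
      p (Sj j ∪ C (j - 1)) - ((((β j - 1) * ((Sj j).card : ℤ) : ℤ) : ℝ) : EReal)
  /-- `Sj j` is the smallest such maximizer. -/
  hSmin : ∀ j, 1 ≤ j → j ≤ q → ∀ X : Finset α, X ⊆ Finset.univ \ C (j - 1) →
    p (X ∪ C (j - 1)) - ((((β j - 1) * (X.card : ℤ) : ℤ) : ℝ) : EReal) =
      p (Sj j ∪ C (j - 1)) - ((((β j - 1) * ((Sj j).card : ℤ) : ℤ) : ℝ) : EReal) →
    Sj j ⊆ X
  hCj : ∀ j, 1 ≤ j → j ≤ q → C j = C (j - 1) ∪ Sj j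

/-- The essential values form a strictly decreasing sequence: `β_{j−1} > β_j`. -/
theorem essential_values_strictly_decreasing (p : Finset α → EReal) (hp0 : p ∅ = 0)
    (hfin : p (Finset.univ : Finset α) ≠ ⊥) (hsup : Supermodular p)
    (hint : IntegerValued p) (q : ℕ) (β : ℕ → ℤ) (C Sj : ℕ → Finset α)
    (hdata : CanonicalData p q β C Sj) :
    ∀ j, 2 ≤ j → j ≤ q → β j < β (j - 1) := by
  obtain ⟨hC0, hCq, hCne, hβub, hβattain, hSsub, hSmax, hSmin, hCj⟩ := hdata
  intro j hj2 hjq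
  have hj1 : 1 ≤ j := by omega
  have hk1 : 1 ≤ j - 1 := by omega
  have hkq : j - 1 ≤ q := by omega
  obtain ⟨X, hXsub, hXne, hXlt⟩ := hβattain j hj1 hjq
  -- p (C (j-1)) is finite
  have hCa_ne : p (C (j - 1)) ≠ ⊥ := by
    intro hbot
    have hne : (Finset.univ \ C (j - 1)).Nonempty := by
      rw [Finset.sdiff_nonempty]
      intro h
      exact hCne j hj1 hjq (Finset.univ_subset_iff.mp h)
    have h := hβub j hj1 hjq (Finset.univ \ C (j - 1)) (subset_refl _) hne
    rw [Finset.sdiff_union_of_subset (Finset.subset_univ _), hbot, EReal.bot_add] at h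
    exact hfin (le_bot_iff.mp h)
  obtain ⟨na, hna⟩ := (hint (C (j - 1))).resolve_left hCa_ne
  have hb_ne : p (X ∪ C (j - 1)) ≠ ⊥ := by
    intro hbot
    rw [hbot, hna, ← EReal.coe_add] at hXlt
    exact (EReal.bot_lt_coe _).not_gt hXlt
  obtain ⟨nb, hnb⟩ := (hint (X ∪ C (j - 1))).resolve_left hb_ne
  have hCk : C (j - 1) = C (j - 1 - 1) ∪ Sj (j - 1) := hCj (j - 1) hk1 hkq
  have hSsub' := hSsub (j - 1) hk1 hkq
  have hXsub' : X ⊆ Finset.univ \ C (j - 1 - 1) := by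
    refine hXsub.trans (Finset.sdiff_subset_sdiff (subset_refl _) ?_)
    rw [hCk]; exact Finset.subset_union_left
  have hsubU : X ∪ Sj (j - 1) ⊆ Finset.univ \ C (j - 1 - 1) :=
    Finset.union_subset hXsub' hSsub'
  have hdisj : Disjoint X (Sj (j - 1)) := by
    refine ((Finset.subset_sdiff.mp hXsub).2).mono_right ?_
    rw [hCk]; exact Finset.subset_union_right
  have hmax := hSmax (j - 1) hk1 hkq (X ∪ Sj (j - 1)) hsubU
  have hU : (X ∪ Sj (j - 1)) ∪ C (j - 1 - 1) = X ∪ C (j - 1) := by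
    rw [Finset.union_assoc]
    congr 1
    rw [hCk, Finset.union_comm]
  have hU2 : Sj (j - 1) ∪ C (j - 1 - 1) = C (j - 1) := by
    rw [hCk, Finset.union_comm]
  have hcard : (X ∪ Sj (j - 1)).card = X.card + (Sj (j - 1)).card :=
    Finset.card_union_of_disjoint hdisj
  rw [hU, hU2, hcard, hna, hnb, ← EReal.coe_sub, ← EReal.coe_sub,
    EReal.coe_le_coe_iff] at hmax
  rw [hna, hnb, ← EReal.coe_add, EReal.coe_lt_coe_iff] at hXlt
  have hm : (1 : ℝ) ≤ (X.card : ℝ) := by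
    exact_mod_cast Nat.one_le_iff_ne_zero.mpr (Finset.card_ne_zero_of_mem hXne.choose_spec)
  push_cast at hmax hXlt
  have : (β j : ℝ) < (β (j - 1) : ℝ) := by nlinarith [hm, hmax, hXlt]
  exact_mod_cast this
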